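/- (Proposition 1, drift part: the drift condition propagates to P².) Suppose the Markov operator P satisfies the drift condition PV(x) ≤ (1−λ)V(x) + b·1_K(x) for all x, where V : X → [1, ∞) is measurable, λ ∈ (0,1], b ∈ [0, ∞), and K = {x ∈ X : V(x) ≤ R} with R > 2b/λ. Then P²V(x) ≤ (1−λ′)V(x) + b′·1_K(x) for all x, where λ′ = λ(3/2 − λ) and b′ = (2−λ)b. -/
import Mathlib


open MeasureTheory ProbabilityTheory

/-- **Proposition 1, drift part.** If `P` satisfies the drift condition
`PV ≤ (1-λ)V + b 1_K` with `K = {V ≤ R}` and `R > 2b/λ`, then `P²` satisfies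
`P²V ≤ (1-λ')V + b' 1_K` with `λ' = λ(3/2 - λ)` and `b' = (2-λ)b`. -/
theorem drift_condition_for_P_squared
    {X : Type*} [MeasurableSpace X]
    (κ : Kernel X X) [IsMarkovKernel κ]
    (V : X → ℝ) (hVmeas : Measurable V) (hV1 : ∀ x, 1 ≤ V x)
    (lam b R : ℝ) (hlam : 0 < lam) (hlam1 : lam ≤ 1) (hb : 0 ≤ b)
    (hR : 2 * b / lam < R)
    -- drift condition (v4) with K = {x | V x ≤ R}
    (hdrift : ∀ x, ∫⁻ y, ENNReal.ofReal (V y) ∂(κ x)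
      ≤ ENNReal.ofReal ((1 - lam) * V x + b * Set.indicator {x | V x ≤ R} 1 x)) :
    ∀ x, ∫⁻ y, (∫⁻ z, ENNReal.ofReal (V z) ∂(κ y)) ∂(κ x)
      ≤ ENNReal.ofReal ((1 - lam * (3 / 2 - lam)) * V x
          + (2 - lam) * b * Set.indicator {x | V x ≤ R} 1 x) := by
  intro x
  set ind : X → ℝ := Set.indicator {x | V x ≤ R} 1 with hind
  have hV0 : ∀ y, 0 ≤ V y := fun y => le_trans zero_le_one (hV1 y)
  have hlam0 : 0 ≤ 1 - lam := by linarith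
  have hind01 : ∀ y, 0 ≤ ind y ∧ ind y ≤ 1 := by
    intro y
    by_cases h : y ∈ {x | V x ≤ R} <;>
      simp [hind, Set.indicator_of_mem, Set.indicator_of_notMem, h]
  calc ∫⁻ y, (∫⁻ z, ENNReal.ofReal (V z) ∂(κ y)) ∂(κ x)
      ≤ ∫⁻ y, ENNReal.ofReal ((1 - lam) * V y + b * ind y) ∂(κ x) :=
        lintegral_mono fun y => hdrift y
    _ = ∫⁻ y, (ENNReal.ofReal ((1 - lam) * V y) + ENNReal.ofReal (b * ind y)) ∂(κ x) := by
        refine lintegral_congr fun y => ?_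
        rw [ENNReal.ofReal_add (mul_nonneg hlam0 (hV0 y)) (mul_nonneg hb (hind01 y).1)]
    _ = (∫⁻ y, ENNReal.ofReal ((1 - lam) * V y) ∂(κ x))
          + ∫⁻ y, ENNReal.ofReal (b * ind y) ∂(κ x) := by
        refine lintegral_add_left ?_ _
        exact ((hVmeas.const_mul _).ennreal_ofReal)
    _ ≤ ENNReal.ofReal (1 - lam) * ENNReal.ofReal ((1 - lam) * V x + b * ind x)
          + ENNReal.ofReal b := by
        gcongr
        · calc ∫⁻ y, ENNReal.ofReal ((1 - lam) * V y) ∂(κ x)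
              = ∫⁻ y, ENNReal.ofReal (1 - lam) * ENNReal.ofReal (V y) ∂(κ x) := by
                refine lintegral_congr fun y => ?_
                rw [ENNReal.ofReal_mul hlam0]
            _ = ENNReal.ofReal (1 - lam) * ∫⁻ y, ENNReal.ofReal (V y) ∂(κ x) := by
                rw [lintegral_const_mul _ hVmeas.ennreal_ofReal]
            _ ≤ _ := by gcongr; exact hdrift x
        · calc ∫⁻ y, ENNReal.ofReal (b * ind y) ∂(κ x)
              ≤ ∫⁻ _, ENNReal.ofReal b ∂(κ x) := by
                refine lintegral_mono fun y => ENNReal.ofReal_le_ofReal ?_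
                nlinarith [(hind01 y).2, (hind01 y).1]
            _ = ENNReal.ofReal b := by simp
    _ = ENNReal.ofReal ((1 - lam) * ((1 - lam) * V x + b * ind x) + b) := by
        rw [ENNReal.ofReal_add (mul_nonneg hlam0 (add_nonneg (mul_nonneg hlam0 (hV0 x)) (mul_nonneg hb (hind01 x).1))) hb, ENNReal.ofReal_mul hlam0]
    _ ≤ _ := by
        refine ENNReal.ofReal_le_ofReal ?_
        by_cases h : x ∈ {x | V x ≤ R}
        · have : ind x = 1 := Set.indicator_of_mem h 1
          rw [this]
          nlinarith [hV1 x]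
        · have : ind x = 0 := Set.indicator_of_notMem h 1
          rw [this]
          have hVx : R < V x := lt_of_not_ge h
          have h2b : 2 * b < lam * V x := by
            have := (div_lt_iff₀ hlam).mp (lt_trans hR hVx)
            linarith [this]
          nlinarith [hV1 x]
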